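/- Let 0 < ω < 2 and let f, g ∈ PW_ω(ℤ) satisfy f(j) + f(j+1) = g(j) + g(j+1) for every even integer j. Then f = g. -/

import Mathlib

open MeasureTheory Real Set

open scoped ENNReal

lemma fourier_unique {T : ℝ} [hT : Fact (0 < T)] (a : ℝ) (K : ℝ → ℂ)
    (hKm : StronglyMeasurable K)
    (hK2 : MemLp K 2 (volume.restrict (Ioc a (a + T))))
    (hcoef : ∀ n : ℤ, fourierCoeffOn (lt_add_of_pos_right a hT.out) K n = 0) :
    ∀ᵐ x ∂(volume.restrict (Ioc a (a + T))), K x = 0 := by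
  set φ : AddCircle T → ℂ := AddCircle.liftIoc T a K with hφdef
  have hφm : StronglyMeasurable φ :=
    hKm.comp_measurable (measurable_subtype_coe.comp (AddCircle.measurableEquivIoc T a).measurable)
  have hcomp : (φ ∘ fun x : ℝ => (x : AddCircle T)) =ᵐ[volume.restrict (Ioc a (a + T))] K := by
    filter_upwards [ae_restrict_mem measurableSet_Ioc] with x hx
    exact AddCircle.liftIoc_coe_apply hx
  have hmap : Measure.map ((↑) : ℝ → AddCircle T) (volume.restrict (Ioc a (a + T)))
      = (volume : Measure (AddCircle T)) := (AddCircle.measurePreserving_mk T a).map_eq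
  have hφvol : MemLp φ 2 (volume : Measure (AddCircle T)) := by
    rw [← hmap]
    rw [memLp_map_measure_iff (by rw [hmap]; exact hφm.aestronglyMeasurable)
      AddCircle.measurable_mk'.aemeasurable]
    exact hK2.ae_eq hcomp.symm
  have hhaar_eq : ((ENNReal.ofReal T)⁻¹ : ℝ≥0∞) • (volume : Measure (AddCircle T))
      = (AddCircle.haarAddCircle : Measure (AddCircle T)) := by
    rw [AddCircle.volume_eq_smul_haarAddCircle, smul_smul,
      ENNReal.inv_mul_cancel (by simpa using hT.out) ENNReal.ofReal_ne_top, one_smul]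
  have hφhaar : MemLp φ 2 (AddCircle.haarAddCircle : Measure (AddCircle T)) := by
    rw [← hhaar_eq]
    exact hφvol.smul_measure (by simp [hT.out])
  have hcoeffL : ∀ n : ℤ, fourierCoeff (⇑(hφhaar.toLp φ)) n = 0 := by
    intro n
    have h1 : fourierCoeff (⇑(hφhaar.toLp φ)) n = fourierCoeff φ n :=
      integral_congr_ae (by filter_upwards [hφhaar.coeFn_toLp] with x hx; rw [hx])
    rw [h1, hφdef, fourierCoeff_liftIoc_eq]
    exact hcoef n
  have hL0 : hφhaar.toLp φ = 0 := by
    apply (fourierBasis (T := T)).repr.injective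
    rw [map_zero]
    ext n
    rw [fourierBasis_repr]
    simpa using hcoeffL n
  have hφ0 : φ =ᵐ[(AddCircle.haarAddCircle : Measure (AddCircle T))] 0 := by
    have h1 := hφhaar.coeFn_toLp
    rw [hL0] at h1
    exact h1.symm.trans (Lp.coeFn_zero _ _ _)
  have hφvol0 : ∀ᵐ y ∂(volume : Measure (AddCircle T)), φ y = 0 := by
    rw [AddCircle.volume_eq_smul_haarAddCircle]
    exact Measure.ae_smul_measure hφ0 _
  have hset : MeasurableSet {y : AddCircle T | φ y = 0} :=
    hφm.measurable (measurableSet_singleton 0)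
  have hpull : ∀ᵐ x ∂(volume.restrict (Ioc a (a + T))), φ ((x : ℝ) : AddCircle T) = 0 := by
    rw [← hmap] at hφvol0
    exact (ae_map_iff AddCircle.measurable_mk'.aemeasurable hset).mp hφvol0
  filter_upwards [hpull, hcomp] with x h1 h2
  rw [← h2]
  exact h1


/-- `f : ℤ → ℂ` belongs to the Paley–Wiener space `PW_ω(ℤ)`: it is square-summable
and the `L²` function `F` on `[−π, π)` whose Fourier coefficients are `f` (the image
of `f` under the Fourier–Plancherel unitary) vanishes a.e. on the set where
`4·sin²(ξ/2) > ω`. -/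
def IsPaleyWienerZ (ω : ℝ) (f : ℤ → ℂ) : Prop :=
  Summable (fun k : ℤ => ‖f k‖ ^ 2) ∧
  ∃ F : ℝ → ℂ,
    MemLp F 2 (volume.restrict (Ico (-π) π)) ∧
    (∀ᵐ ξ ∂(volume.restrict (Ico (-π) π)), ω < 4 * Real.sin (ξ / 2) ^ 2 → F ξ = 0) ∧
    ∀ k : ℤ, f k = ((1 / (2 * π) : ℝ) : ℂ) *
      ∫ ξ in Ico (-π) π, F ξ * Complex.exp (-(Complex.I * (k : ℂ) * (ξ : ℂ)))

/-- Let `0 < ω < 2` and let `f, g ∈ PW_ω(ℤ)` satisfy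
`f(j) + f(j+1) = g(j) + g(j+1)` for every even integer `j`.  Then `f = g`. -/
theorem stmt_18 (ω : ℝ) (hω0 : 0 < ω) (hω2 : ω < 2) (f g : ℤ → ℂ)
    (hf : IsPaleyWienerZ ω f) (hg : IsPaleyWienerZ ω g)
    (h : ∀ j : ℤ, Even j → f j + f (j + 1) = g j + g (j + 1)) :
    f = g := by
  haveI : Fact (0 < π) := ⟨pi_pos⟩
  obtain ⟨-, F, hF2, hFsupp, hFrep⟩ := hf
  obtain ⟨-, G, hG2, hGsupp, hGrep⟩ := hg
  set μ := volume.restrict (Ico (-π) π) with hμ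
  haveI : IsFiniteMeasure μ := by
    constructor
    rw [hμ, Measure.restrict_apply_univ, Real.volume_Ico]
    exact ENNReal.ofReal_lt_top
  -- measurable representatives
  set F' := hF2.1.mk F with hF'def
  have hF'm : StronglyMeasurable F' := hF2.1.stronglyMeasurable_mk
  have hF'eq : F =ᵐ[μ] F' := hF2.1.ae_eq_mk
  have hF'2 : MemLp F' 2 μ := hF2.ae_eq hF'eq
  have hF'supp : ∀ᵐ ξ ∂μ, ω < 4 * Real.sin (ξ / 2) ^ 2 → F' ξ = 0 := by
    filter_upwards [hFsupp, hF'eq] with ξ h1 h2 h3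
    rw [← h2]; exact h1 h3
  set G' := hG2.1.mk G with hG'def
  have hG'm : StronglyMeasurable G' := hG2.1.stronglyMeasurable_mk
  have hG'eq : G =ᵐ[μ] G' := hG2.1.ae_eq_mk
  have hG'2 : MemLp G' 2 μ := hG2.ae_eq hG'eq
  have hG'supp : ∀ᵐ ξ ∂μ, ω < 4 * Real.sin (ξ / 2) ^ 2 → G' ξ = 0 := by
    filter_upwards [hGsupp, hG'eq] with ξ h1 h2 h3
    rw [← h2]; exact h1 h3
  -- integrability
  have hInt : ∀ (P : ℝ → ℂ), MemLp P 2 μ → ∀ k : ℤ,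
      Integrable (fun ξ : ℝ => P ξ * Complex.exp (-(Complex.I * (k : ℂ) * (ξ : ℂ)))) μ := by
    intro P hP k
    have h1 : Integrable P μ := hP.integrable (by norm_num)
    have hexp : AEStronglyMeasurable
        (fun ξ : ℝ => Complex.exp (-(Complex.I * (k : ℂ) * (ξ : ℂ)))) μ :=
      (Complex.continuous_exp.comp ((continuous_const.mul Complex.continuous_ofReal).neg)).aestronglyMeasurable
    have hbdd : ∃ C, ∀ x : ℝ, ‖Complex.exp (-(Complex.I * (k : ℂ) * (x : ℂ)))‖ ≤ C := by
      refine ⟨1, fun x => ?_⟩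
      rw [Complex.norm_exp]
      simp
    obtain ⟨C, hC⟩ := hbdd
    exact (h1.bdd_mul hexp (Filter.Eventually.of_forall hC)).congr (Filter.Eventually.of_forall fun x => mul_comm _ _)
  have hF'rep : ∀ k : ℤ, f k = ((1 / (2 * π) : ℝ) : ℂ) *
      ∫ ξ, F' ξ * Complex.exp (-(Complex.I * (k : ℂ) * (ξ : ℂ))) ∂μ := by
    intro k
    rw [hFrep k]
    congr 1
    exact integral_congr_ae (hF'eq.mul (Filter.EventuallyEq.refl _ _))
  have hG'rep : ∀ k : ℤ, g k = ((1 / (2 * π) : ℝ) : ℂ) *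
      ∫ ξ, G' ξ * Complex.exp (-(Complex.I * (k : ℂ) * (ξ : ℂ))) ∂μ := by
    intro k
    rw [hGrep k]
    congr 1
    exact integral_congr_ae (hG'eq.mul (Filter.EventuallyEq.refl _ _))
  -- the difference
  set H : ℝ → ℂ := fun ξ => F' ξ - G' ξ with hHdef
  have hHm : StronglyMeasurable H := hF'm.sub hG'm
  have hH2 : MemLp H 2 μ := hF'2.sub hG'2
  have hHsupp : ∀ᵐ ξ ∂μ, ω < 4 * Real.sin (ξ / 2) ^ 2 → H ξ = 0 := by
    filter_upwards [hF'supp, hG'supp] with ξ h1 h2 h3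
    simp only [hHdef, h1 h3, h2 h3, sub_zero]
  have hIntH := hInt H hH2
  have hdiff : ∀ k : ℤ, ((1 / (2 * π) : ℝ) : ℂ) *
      ∫ ξ, H ξ * Complex.exp (-(Complex.I * (k : ℂ) * (ξ : ℂ))) ∂μ = f k - g k := by
    intro k
    rw [hF'rep k, hG'rep k, ← mul_sub]
    congr 1
    rw [← integral_sub (hInt F' hF'2 k) (hInt G' hG'2 k)]
    refine integral_congr_ae (Filter.Eventually.of_forall fun ξ => ?_)
    simp only [hHdef]
    ring
  have hπc : ((1 / (2 * π) : ℝ) : ℂ) ≠ 0 := by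
    simp [Real.pi_ne_zero]
  set W : ℝ → ℂ := fun ξ => H ξ * (1 + Complex.exp (-(Complex.I * (ξ : ℂ)))) with hWdef
  have key : ∀ n : ℤ,
      ∫ ξ, W ξ * Complex.exp (-(Complex.I * ((2 * n : ℤ) : ℂ) * (ξ : ℂ))) ∂μ = 0 := by
    intro n
    have heven := h (2 * n) (even_two_mul n)
    have h1 := hdiff (2 * n)
    have h2 := hdiff (2 * n + 1)
    have hsum : ((1 / (2 * π) : ℝ) : ℂ) *
        ((∫ ξ, H ξ * Complex.exp (-(Complex.I * ((2 * n : ℤ) : ℂ) * (ξ : ℂ))) ∂μ) +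
         (∫ ξ, H ξ * Complex.exp (-(Complex.I * ((2 * n + 1 : ℤ) : ℂ) * (ξ : ℂ))) ∂μ)) = 0 := by
      rw [mul_add, h1, h2]
      linear_combination heven
    have h3 : (∫ ξ, H ξ * Complex.exp (-(Complex.I * ((2 * n : ℤ) : ℂ) * (ξ : ℂ))) ∂μ) +
        (∫ ξ, H ξ * Complex.exp (-(Complex.I * ((2 * n + 1 : ℤ) : ℂ) * (ξ : ℂ))) ∂μ) = 0 :=
      (mul_eq_zero.mp hsum).resolve_left hπc
    rw [← integral_add (hIntH (2 * n)) (hIntH (2 * n + 1))] at h3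
    rw [← h3]
    refine integral_congr_ae (Filter.Eventually.of_forall fun ξ => ?_)
    have hE : Complex.exp (-(Complex.I * ((2 * n + 1 : ℤ) : ℂ) * (ξ : ℂ))) =
        Complex.exp (-(Complex.I * ((2 * n : ℤ) : ℂ) * (ξ : ℂ))) *
        Complex.exp (-(Complex.I * (ξ : ℂ))) := by
      rw [← Complex.exp_add]
      congr 1
      push_cast
      ring
    simp only [hWdef, hE]
    ring
  -- support of H is inside Ioo (-(π/2)) (π/2), a.e.
  have hH0out : ∀ᵐ ξ ∂μ, ξ ∉ Ioo (-(π / 2)) (π / 2) → H ξ = 0 := by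
    rw [hμ]
    filter_upwards [hHsupp, ae_restrict_mem measurableSet_Ico] with ξ h1 h2 h3
    apply h1
    have hsq : Real.sin (ξ / 2) ^ 2 = (1 - Real.cos ξ) / 2 := by
      rw [← sq_abs, Real.abs_sin_half, sq_sqrt (by linarith [Real.cos_le_one ξ])]
    have hcos : Real.cos ξ ≤ 0 := by
      rw [mem_Ioo, not_and_or] at h3
      rcases h3 with hc | hc
      · push_neg at hc
        have h4 : Real.cos ξ = Real.cos (-ξ) := (Real.cos_neg ξ).symm
        rw [h4]
        apply Real.cos_nonpos_of_pi_div_two_le_of_le (by linarith)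
        have := h2.1
        linarith
      · push_neg at hc
        apply Real.cos_nonpos_of_pi_div_two_le_of_le hc
        have := h2.2
        linarith
    rw [hsq]
    linarith
  -- the cut-off function K
  set K : ℝ → ℂ := (Ioo (-(π / 2)) (π / 2)).indicator W with hKdef
  have hWm : StronglyMeasurable W := by
    apply hHm.mul
    exact (continuous_const.add (Complex.continuous_exp.comp
      ((continuous_const.mul Complex.continuous_ofReal).neg))).stronglyMeasurable
  have hKm : StronglyMeasurable K := hWm.indicator measurableSet_Ioo
  have hhalf : -(π / 2) + π = π / 2 := by ring
  have hsub : Ioc (-(π / 2)) (-(π / 2) + π) ⊆ Ico (-π) π := by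
    intro x hx
    rw [hhalf] at hx
    exact ⟨by linarith [hx.1, pi_pos], by linarith [hx.2, pi_pos]⟩
  have hsubIoo : Ioo (-(π / 2)) (π / 2) ⊆ Ico (-π) π := by
    intro x hx
    exact ⟨by linarith [hx.1, pi_pos], by linarith [hx.2, pi_pos]⟩
  have hnorm_exp : ∀ x : ℝ, ‖Complex.exp (-(Complex.I * (x : ℂ)))‖ = 1 := by
    intro x
    rw [Complex.norm_exp]
    simp
  have hKle : ∀ x : ℝ, ‖K x‖ ≤ 2 * ‖H x‖ := by
    intro x
    by_cases hx : x ∈ Ioo (-(π / 2)) (π / 2)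
    · rw [hKdef, indicator_of_mem hx, hWdef]
      rw [norm_mul]
      have hb : ‖(1 : ℂ) + Complex.exp (-(Complex.I * (x : ℂ)))‖ ≤ 2 := by
        refine (norm_add_le _ _).trans ?_
        rw [norm_one, hnorm_exp]
        norm_num
      nlinarith [norm_nonneg (H x)]
    · rw [hKdef, indicator_of_notMem hx, norm_zero]
      positivity
  have hK2 : MemLp K 2 (volume.restrict (Ioc (-(π / 2)) (-(π / 2) + π))) := by
    have hmono : volume.restrict (Ioc (-(π / 2)) (-(π / 2) + π)) ≤ μ := by
      rw [hμ]
      exact Measure.restrict_mono hsub le_rfl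
    exact MemLp.of_le_mul (hH2.mono_measure hmono) hKm.aestronglyMeasurable
      (Filter.Eventually.of_forall hKle)
  have hexp_eq : ∀ (n : ℤ) (x : ℝ),
      (fourier (T := π) (-n) (x : AddCircle π) : ℂ) =
      Complex.exp (-(Complex.I * ((2 * n : ℤ) : ℂ) * (x : ℂ))) := by
    intro n x
    rw [fourier_coe_apply]
    congr 1
    have hπ : (π : ℂ) ≠ 0 := by exact_mod_cast Real.pi_ne_zero
    push_cast
    field_simp
  have hIoo : ∀ n : ℤ,
      ∫ ξ in Ioo (-(π / 2)) (π / 2),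
        W ξ * Complex.exp (-(Complex.I * ((2 * n : ℤ) : ℂ) * (ξ : ℂ))) = 0 := by
    intro n
    rw [← key n]
    have e1 : ∫ ξ, W ξ * Complex.exp (-(Complex.I * ((2 * n : ℤ) : ℂ) * (ξ : ℂ))) ∂μ =
        ∫ ξ, (Ioo (-(π / 2)) (π / 2)).indicator
          (fun ξ => W ξ * Complex.exp (-(Complex.I * ((2 * n : ℤ) : ℂ) * (ξ : ℂ)))) ξ ∂μ := by
      refine integral_congr_ae ?_
      filter_upwards [hH0out] with ξ h1
      by_cases hm : ξ ∈ Ioo (-(π / 2)) (π / 2)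
      · rw [indicator_of_mem hm]
      · rw [indicator_of_notMem hm, hWdef]
        simp [h1 hm]
    have e2 : ∫ ξ, (Ioo (-(π / 2)) (π / 2)).indicator
          (fun ξ => W ξ * Complex.exp (-(Complex.I * ((2 * n : ℤ) : ℂ) * (ξ : ℂ)))) ξ ∂μ =
        ∫ ξ in Ioo (-(π / 2)) (π / 2),
          W ξ * Complex.exp (-(Complex.I * ((2 * n : ℤ) : ℂ) * (ξ : ℂ))) := by
      rw [hμ, setIntegral_indicator measurableSet_Ioo]
      congr 1
      rw [inter_eq_self_of_subset_right hsubIoo]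
    exact (e1.trans e2).symm
  have hKcoef : ∀ n : ℤ, fourierCoeffOn (lt_add_of_pos_right (-(π / 2)) Real.pi_pos) K n = 0 := by
    intro n
    rw [fourierCoeffOn_eq_integral]
    have hper : -(π / 2) + π - -(π / 2) = π := by ring
    rw [hper]
    rw [intervalIntegral.integral_of_le (by linarith [pi_pos] : -(π / 2) ≤ -(π / 2) + π)]
    have hz : ∫ x in Ioc (-(π / 2)) (-(π / 2) + π),
        (fourier (T := π) (-n) (x : AddCircle π) : ℂ) • K x = 0 := by
      rw [hhalf, integral_Ioc_eq_integral_Ioo, ← hIoo n]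
      refine setIntegral_congr_fun measurableSet_Ioo fun x hx => ?_
      rw [hexp_eq, smul_eq_mul, hKdef, indicator_of_mem hx]
      ring
    rw [hz, smul_zero]
  have hK0 := fourier_unique (T := π) (-(π / 2)) K hKm hK2 hKcoef
  have hKg : ∀ᵐ x ∂(volume : Measure ℝ), x ∈ Ioc (-(π / 2)) (-(π / 2) + π) → K x = 0 :=
    ae_imp_of_ae_restrict hK0
  have hH0in : ∀ᵐ ξ ∂μ, ξ ∈ Ioo (-(π / 2)) (π / 2) → H ξ = 0 := by
    rw [hμ]
    apply ae_restrict_of_ae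
    filter_upwards [hKg] with ξ h1 h2
    have hmem : ξ ∈ Ioc (-(π / 2)) (-(π / 2) + π) :=
      ⟨h2.1, by rw [hhalf]; exact le_of_lt h2.2⟩
    have h3 := h1 hmem
    rw [hKdef, indicator_of_mem h2, hWdef] at h3
    have h4 : (1 : ℂ) + Complex.exp (-(Complex.I * (ξ : ℂ))) ≠ 0 := by
      intro hc
      have h5 : (Complex.exp (-(Complex.I * (ξ : ℂ)))).re = Real.cos ξ := by
        rw [show -(Complex.I * (ξ : ℂ)) = ((-ξ : ℝ) : ℂ) * Complex.I by push_cast; ring,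
          Complex.exp_ofReal_mul_I_re, Real.cos_neg]
      have h6 := congrArg Complex.re hc
      simp only [Complex.add_re, Complex.one_re, h5, Complex.zero_re] at h6
      have h7 := Real.cos_pos_of_mem_Ioo
        (⟨h2.1, h2.2⟩ : ξ ∈ Ioo (-(π / 2)) (π / 2))
      linarith
    exact (mul_eq_zero.mp h3).resolve_right h4
  have hH0 : ∀ᵐ ξ ∂μ, H ξ = 0 := by
    filter_upwards [hH0out, hH0in] with ξ h1 h2
    by_cases hm : ξ ∈ Ioo (-(π / 2)) (π / 2)
    · exact h2 hm
    · exact h1 hm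
  funext k
  have h1 := hdiff k
  have h2 : ∫ ξ, H ξ * Complex.exp (-(Complex.I * (k : ℂ) * (ξ : ℂ))) ∂μ = 0 := by
    apply integral_eq_zero_of_ae
    filter_upwards [hH0] with ξ hξ
    simp [hξ]
  rw [h2, mul_zero] at h1
  exact sub_eq_zero.mp h1.symm
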